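/- Fix d, h ∈ ℕ and set |Λ^n| := (2n)^d. Let {S^n}_{n∈ℕ} be a strongly regular and strongly nearly additive ℝ^h-valued process consisting of integrable random variables, and suppose sup_{n∈ℕ} ‖E[S^n]‖/|Λ^n| < ∞. Then the limit Ŝ := lim_{n→∞} E[S^n]/|Λ^n| exists in ℝ^h, and S^n/|Λ^n| → Ŝ almost surely as n → ∞. -/

import Mathlib

open MeasureTheory Filter
open scoped ENNReal RealInnerProductSpace

namespace RandomCubical

variable {Ω : Type*} [MeasurableSpace Ω]

/-- `|Λ^n| = (2n)^d`. -/
noncomputable def vol (d n : ℕ) : ℝ := (2 * (n : ℝ)) ^ d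

/-- The lattice box `ℤ^d ∩ [-m, m]^d`. -/
noncomputable def box (d m : ℕ) : Finset (Fin d → ℤ) :=
  Fintype.piFinset fun _ => Finset.Icc (-(m : ℤ)) (m : ℤ)

/-- The conditions of strong `r`-near additivity, for a given witness family
`T n z` (`z ∈ ℤ^d`) of independent copies of `S n`:
`sup_{m} |Λ^{(2m+1)k}|⁻¹ ‖S^{(2m+1)k} - ∑_z S^{k-r,z}‖ → 0` almost surely as `k → ∞`. -/
def StrongNAWitness (d h : ℕ) (P : Measure Ω) (S : ℕ → Ω → EuclideanSpace ℝ (Fin h))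
    (r : ℕ) (T : ℕ → (Fin d → ℤ) → Ω → EuclideanSpace ℝ (Fin h)) : Prop :=
  (∀ n, 1 ≤ n → ProbabilityTheory.iIndepFun (T n) P) ∧
  (∀ n, 1 ≤ n → ∀ z, ProbabilityTheory.IdentDistrib (T n z) (S n) P P) ∧
  ∀ᵐ ω ∂P, ∀ ε > (0 : ℝ), ∃ K : ℕ, r < K ∧ ∀ k, K ≤ k → ∀ m : ℕ, 1 ≤ m →
    ‖S ((2 * m + 1) * k) ω - ∑ z ∈ box d m, T (k - r) z ω‖ ≤ ε * vol d ((2 * m + 1) * k)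

/-- Strongly nearly additive process. -/
def StrongNearlyAdditive (d h : ℕ) (P : Measure Ω)
    (S : ℕ → Ω → EuclideanSpace ℝ (Fin h)) : Prop :=
  ∃ r T, StrongNAWitness d h P S r T

/-- Strongly regular process: for each fixed `k`,
`|Λ^n|⁻¹ ‖S^n - S^{(2 m_n + 1)k}‖ → 0` almost surely as `n → ∞`, where `m_n` is the
unique integer with `(2 m_n + 1)k ≤ n < (2 m_n + 3)k`. -/
def StrongRegular (d h : ℕ) (P : Measure Ω)
    (S : ℕ → Ω → EuclideanSpace ℝ (Fin h)) : Prop :=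
  ∀ k, 1 ≤ k → ∀ᵐ ω ∂P, ∀ ε > (0 : ℝ), ∃ N : ℕ, ∀ n, N ≤ n → ∀ m : ℕ,
    (2 * m + 1) * k ≤ n → n < (2 * m + 3) * k →
    ‖S n ω - S ((2 * m + 1) * k) ω‖ ≤ ε * vol d n

open scoped Topology

/- ### auxiliary enumeration machinery -/
section Enum
variable {α : Type*} [Nonempty α] [DecidableEq α]

variable (s : ℕ → Finset α)

noncomputable def enumIdx (hs : ∀ n, n < (s n).card) (n : ℕ) : ℕ :=
  Nat.find (⟨n, hs n⟩ : ∃ m, n < (s m).card)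

lemma enumIdx_spec (hs : ∀ n, n < (s n).card) (n : ℕ) : n < (s (enumIdx s hs n)).card :=
  Nat.find_spec (⟨n, hs n⟩ : ∃ m, n < (s m).card)

lemma enumIdx_le (hs : ∀ n, n < (s n).card) {n m : ℕ} (hm : n < (s m).card) :
    enumIdx s hs n ≤ m := Nat.find_le hm

lemma enumIdx_mono (hs : ∀ n, n < (s n).card) : Monotone (enumIdx s hs) := by
  intro a b hab
  exact Nat.find_mono (fun m hm => lt_of_le_of_lt hab hm)

noncomputable def enumPick (L : List α) (t : Finset α) : α :=
  if hne : (t \ L.toFinset).Nonempty then hne.choose else Classical.arbitrary α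

noncomputable def enumList (hs : ∀ n, n < (s n).card) : ℕ → List α
  | 0 => []
  | n + 1 => enumList hs n ++ [enumPick (enumList hs n) (s (enumIdx s hs n))]

noncomputable def enum (hs : ∀ n, n < (s n).card) (n : ℕ) : α :=
  enumPick (enumList s hs n) (s (enumIdx s hs n))

lemma enumList_succ (hs : ∀ n, n < (s n).card) (n : ℕ) :
    enumList s hs (n + 1) = enumList s hs n ++ [enum s hs n] := rfl

lemma enumList_length (hs : ∀ n, n < (s n).card) (n : ℕ) :
    (enumList s hs n).length = n := by
  induction n with
  | zero => rfl
  | succ n ih => simp [enumList_succ, ih]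

lemma enumList_mem_iff (hs : ∀ n, n < (s n).card) (n : ℕ) (a : α) :
    a ∈ enumList s hs n ↔ ∃ i < n, enum s hs i = a := by
  induction n with
  | zero => simp [enumList]
  | succ n ih =>
    simp only [enumList_succ, List.mem_append, List.mem_singleton, ih]
    constructor
    · rintro (⟨i, hi, rfl⟩ | rfl)
      · exact ⟨i, by omega, rfl⟩
      · exact ⟨n, by omega, rfl⟩
    · rintro ⟨i, hi, rfl⟩
      rcases Nat.lt_succ_iff_lt_or_eq.mp hi with hi | rfl
      · exact Or.inl ⟨i, hi, rfl⟩
      · exact Or.inr rfl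

lemma enum_spec (hmono : Monotone s) (hs : ∀ n, n < (s n).card) (n : ℕ) :
    enum s hs n ∈ s (enumIdx s hs n) ∧ enum s hs n ∉ enumList s hs n := by
  induction n using Nat.strong_induction_on with
  | _ n ih =>
    have hsub : (enumList s hs n).toFinset ⊆ s (enumIdx s hs n) := by
      intro a ha
      rw [List.mem_toFinset, enumList_mem_iff] at ha
      obtain ⟨i, hi, rfl⟩ := ha
      exact hmono (enumIdx_mono s hs hi.le) (ih i hi).1
    have hne : (s (enumIdx s hs n) \ (enumList s hs n).toFinset).Nonempty := by
      rw [Finset.sdiff_nonempty]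
      intro hcon
      have h1 := Finset.card_le_card hcon
      have h2 := (enumList s hs n).toFinset_card_le
      rw [enumList_length] at h2
      have := enumIdx_spec s hs n
      omega
    have : enum s hs n ∈ s (enumIdx s hs n) \ (enumList s hs n).toFinset := by
      rw [enum, enumPick, dif_pos hne]
      exact hne.choose_spec
    rw [Finset.mem_sdiff, List.mem_toFinset] at this
    exact this

lemma enum_injective (hmono : Monotone s) (hs : ∀ n, n < (s n).card) :
    Function.Injective (enum s hs) := by
  intro i j hij
  by_contra hne
  wlog hlt : i < j generalizing i j
  · exact this hij.symm (Ne.symm hne) (by omega)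
  have := (enum_spec s hmono hs j).2
  rw [enumList_mem_iff] at this
  exact this ⟨i, hlt, hij⟩

lemma enum_image (hmono : Monotone s) (hs : ∀ n, n < (s n).card) (m : ℕ) :
    (Finset.range (s m).card).image (enum s hs) = s m := by
  apply Finset.eq_of_subset_of_card_le
  · intro a ha
    rw [Finset.mem_image] at ha
    obtain ⟨i, hi, rfl⟩ := ha
    rw [Finset.mem_range] at hi
    exact hmono (enumIdx_le s hs hi) (enum_spec s hmono hs i).1
  · rw [Finset.card_image_of_injective _ (enum_injective s hmono hs), Finset.card_range]

lemma enum_sum {β : Type*} [AddCommMonoid β] (hmono : Monotone s) (hs : ∀ n, n < (s n).card)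
    (m : ℕ) (f : α → β) :
    ∑ z ∈ s m, f z = ∑ i ∈ Finset.range (s m).card, f (enum s hs i) := by
  have h1 : ∑ i ∈ Finset.range (s m).card, f (enum s hs i)
      = ∑ z ∈ (Finset.range (s m).card).image (enum s hs), f z :=
    (Finset.sum_image fun i _ j _ hij => enum_injective s hmono hs hij).symm
  rw [h1, enum_image s hmono hs m]

end Enum

/- ### auxiliary volume lemmas -/

lemma box_mono (d : ℕ) : Monotone (box d) := by
  intro a b hab
  exact Fintype.piFinset_subset _ _ fun i =>
    Finset.Icc_subset_Icc (by exact_mod_cast Int.neg_le_neg (by exact_mod_cast hab))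
      (by exact_mod_cast hab)

lemma box_card (d m : ℕ) : (box d m).card = (2 * m + 1) ^ d := by
  rw [box, Fintype.card_piFinset]
  have h : (Finset.Icc (-(m : ℤ)) (m : ℤ)).card = 2 * m + 1 := by
    rw [Int.card_Icc]
    omega
  simp [h]

lemma lt_box_card (d : ℕ) (hd : 1 ≤ d) (m : ℕ) : m < (box d m).card := by
  rw [box_card]
  calc m < 2 * m + 1 := by omega
  _ = (2 * m + 1) ^ 1 := (pow_one _).symm
  _ ≤ (2 * m + 1) ^ d := Nat.pow_le_pow_right (by omega) hd

lemma vol_pos (d : ℕ) {n : ℕ} (hn : 1 ≤ n) : 0 < vol d n := by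
  have h : (0:ℝ) < (n:ℝ) := by exact_mod_cast hn
  unfold vol; positivity

lemma vol_mono (d : ℕ) {a b : ℕ} (hab : a ≤ b) : vol d a ≤ vol d b := by
  unfold vol
  have : (a:ℝ) ≤ b := by exact_mod_cast hab
  gcongr <;> linarith

lemma vol_mul (d k m : ℕ) :
    vol d ((2 * m + 1) * k) = vol d k * (((2 * m + 1) ^ d : ℕ) : ℝ) := by
  unfold vol
  push_cast
  rw [← mul_pow]
  ring_nf

lemma smul_est {E : Type*} [NormedAddCommGroup E] [NormedSpace ℝ E] {v v' : ℝ}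
    (hv : 0 < v) (hv' : 0 < v') (hle : v' ≤ v) (B μ : E) :
    ‖v⁻¹ • B - μ‖ ≤ ‖v'⁻¹ • B - μ‖ + (1 - v' / v) * ‖μ‖ := by
  have hρ0 : 0 < v' / v := div_pos hv' hv
  have hρ1 : v' / v ≤ 1 := div_le_one_of_le₀ hle hv.le
  have key : v⁻¹ • B - μ = (v' / v) • (v'⁻¹ • B - μ) + ((v' / v) - 1) • μ := by
    rw [smul_sub, smul_smul, sub_smul, one_smul]
    have : v' / v * v'⁻¹ = v⁻¹ := by field_simp
    rw [this]
    abel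
  rw [key]
  refine (norm_add_le _ _).trans ?_
  rw [norm_smul, norm_smul, Real.norm_eq_abs, Real.norm_eq_abs,
    abs_of_pos hρ0, abs_of_nonpos (by linarith)]
  have h1 : v' / v * ‖v'⁻¹ • B - μ‖ ≤ ‖v'⁻¹ • B - μ‖ := by
    nlinarith [norm_nonneg (v'⁻¹ • B - μ)]
  have h2 : -(v' / v - 1) = 1 - v' / v := by ring
  rw [h2]
  linarith

lemma one_sub_div_le_vol_ratio (d k m n : ℕ) (hd : 1 ≤ d) (hk : 1 ≤ k) (hm : 1 ≤ m)
    (h1 : (2 * m + 1) * k ≤ n) (h2 : n < (2 * m + 3) * k) :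
    1 - (d : ℝ) / m ≤ vol d ((2 * m + 1) * k) / vol d n := by
  have hm' : (0:ℝ) < m := by exact_mod_cast hm
  have hn1 : 1 ≤ n := le_trans (Nat.one_le_iff_ne_zero.mpr (by positivity)) h1
  have hnpos : (0:ℝ) < (n:ℝ) := by exact_mod_cast hn1
  have hkpos : (0:ℝ) < (k:ℝ) := by exact_mod_cast hk
  have hnle : (n:ℝ) ≤ (2*m+3)*k := by exact_mod_cast h2.le
  have h3 : (0:ℝ) < 2*(m:ℝ)+3 := by linarith
  have step1 : ((2*(m:ℝ)+1))/(2*m+3) ≤ ((2*(m:ℝ)+1)*k)/n := by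
    rw [div_le_div_iff₀ h3 hnpos]
    nlinarith
  have bern := one_add_mul_le_pow (a := -(2/(2*(m:ℝ)+3))) (by
    have : 2/(2*(m:ℝ)+3) ≤ 2 := by
      rw [div_le_iff₀ h3]; nlinarith
    linarith) d
  have step2 : (1 + -(2/(2*(m:ℝ)+3))) = (2*m+1)/(2*m+3) := by
    field_simp; ring
  have hratio_eq : vol d ((2 * m + 1) * k) / vol d n = ((2*(m:ℝ)+1)*k / n)^d := by
    unfold vol
    rw [← div_pow]
    congr 1
    push_cast
    rw [mul_comm (2:ℝ) ((2*(m:ℝ)+1)*k), mul_comm (2:ℝ) (n:ℝ),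
      mul_div_mul_right _ _ (two_ne_zero)]
  rw [hratio_eq]
  calc 1 - (d:ℝ)/m ≤ 1 + (d:ℝ) * -(2/(2*(m:ℝ)+3)) := by
        have h4 : 2/(2*(m:ℝ)+3) ≤ 1/m := by
          rw [div_le_div_iff₀ h3 hm']; nlinarith
        have hd0 : (0:ℝ) ≤ d := Nat.cast_nonneg d
        have := mul_le_mul_of_nonneg_left h4 hd0
        rw [mul_one_div] at this
        linarith
    _ ≤ (1 + -(2/(2*(m:ℝ)+3)))^d := bern
    _ = ((2*(m:ℝ)+1)/(2*m+3))^d := by rw [step2]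
    _ ≤ ((2*(m:ℝ)+1)*k / n)^d := by
        apply pow_le_pow_left₀ (by positivity) step1

theorem slln_of_strongRegular_strongNearlyAdditive
    (d h : ℕ) (hd : 1 ≤ d) (hh : 1 ≤ h)
    (P : Measure Ω) [IsProbabilityMeasure P]
    (S : ℕ → Ω → EuclideanSpace ℝ (Fin h)) (hmeas : ∀ n, Measurable (S n))
    (hint : ∀ n, Integrable (S n) P)
    (hreg : StrongRegular d h P S) (hadd : StrongNearlyAdditive d h P S)
    (hbound : ∃ C : ℝ, ∀ n, 1 ≤ n → ‖∫ ω, S n ω ∂P‖ ≤ C * vol d n) :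
    ∃ Shat : EuclideanSpace ℝ (Fin h),
      Tendsto (fun n => (vol d n)⁻¹ • ∫ ω, S n ω ∂P) atTop (nhds Shat) ∧
      ∀ᵐ ω ∂P, Tendsto (fun n => (vol d n)⁻¹ • S n ω) atTop (nhds Shat) := by
  classical
  obtain ⟨r, T, hTindep, hTident, hTae⟩ := hadd
  have hmono : Monotone (box d) := box_mono d
  have hcards : ∀ n, n < (box d n).card := lt_box_card d hd
  set μseq : ℕ → EuclideanSpace ℝ (Fin h) :=
    fun k => (vol d k)⁻¹ • ∫ ω, S (k - r) ω ∂P with hμseq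
  -- SLLN along boxes
  have hslln : ∀ j, 1 ≤ j → ∀ᵐ ω ∂P,
      Tendsto (fun m => (((box d m).card : ℝ))⁻¹ • ∑ z ∈ box d m, T j z ω) atTop
        (𝓝 (∫ ω, S j ω ∂P)) := by
    intro j hj
    have hid : ∀ i : ℕ, ProbabilityTheory.IdentDistrib
        (T j (enum (box d) hcards i)) (S j) P P := fun i => hTident j hj _
    have hX0 : Integrable (T j (enum (box d) hcards 0)) P :=
      (hid 0).integrable_iff.mpr (hint j)
    have hpair : Pairwise (Function.onFun (ProbabilityTheory.IndepFun · · P)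
        fun i => T j (enum (box d) hcards i)) := fun i i' hii' =>
      (hTindep j hj).indepFun ((enum_injective (box d) hmono hcards).ne hii')
    have hident : ∀ i, ProbabilityTheory.IdentDistrib
        (T j (enum (box d) hcards i)) (T j (enum (box d) hcards 0)) P P :=
      fun i => (hid i).trans (hid 0).symm
    have hsl := ProbabilityTheory.strong_law_ae
      (fun i => T j (enum (box d) hcards i)) hX0 hpair hident
    rw [(hid 0).integral_eq] at hsl
    filter_upwards [hsl] with ω hω
    have hNtop : Tendsto (fun m => (box d m).card) atTop atTop :=
      tendsto_atTop_mono (fun m => (hcards m).le) tendsto_id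
    have hcomp := hω.comp hNtop
    refine Tendsto.congr (fun m => ?_) hcomp
    simp only [Function.comp_apply]
    congr 1
    exact (enum_sum (box d) hmono hcards m (fun z => T j z ω)).symm
  -- SLLN scaled by vol, per k
  have hsllnK : ∀ᵐ ω ∂P, ∀ k, r + 1 ≤ k →
      Tendsto (fun m => (vol d ((2 * m + 1) * k))⁻¹ • ∑ z ∈ box d m, T (k - r) z ω) atTop
        (𝓝 (μseq k)) := by
    rw [ae_all_iff]
    intro k
    by_cases hk : r + 1 ≤ k
    · have hj : 1 ≤ k - r := by omega
      filter_upwards [hslln (k - r) hj] with ω hω _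
      have hk1 : 1 ≤ k := by omega
      have h2 := hω.const_smul ((vol d k)⁻¹)
      refine Tendsto.congr (fun m => ?_) h2
      rw [smul_smul, ← mul_inv]
      congr 2
      rw [box_card, ← vol_mul d k m]
    · exact Eventually.of_forall (fun ω hk' => absurd hk' hk)
  -- regularity, all k
  have hregae : ∀ᵐ ω ∂P, ∀ k, 1 ≤ k → ∀ ε > (0:ℝ), ∃ N : ℕ, ∀ n, N ≤ n → ∀ m : ℕ,
      (2 * m + 1) * k ≤ n → n < (2 * m + 3) * k →
      ‖S n ω - S ((2 * m + 1) * k) ω‖ ≤ ε * vol d n := by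
    rw [ae_all_iff]
    intro k
    by_cases hk : 1 ≤ k
    · filter_upwards [hreg k hk] with ω hω _
      exact hω
    · exact Eventually.of_forall (fun ω hk' => absurd hk' hk)
  -- the key deterministic estimate
  have key : ∀ᵐ ω ∂P, ∀ ε : ℝ, 0 < ε → ∃ K, r < K ∧ ∀ k, K ≤ k →
      ∃ N, ∀ n, N ≤ n → ‖(vol d n)⁻¹ • S n ω - μseq k‖ ≤ ε := by
    filter_upwards [hTae, hsllnK, hregae] with ω hNA hSL hRG
    intro ε hε
    obtain ⟨K₀, hK₀r, hNA'⟩ := hNA (ε / 8) (by positivity)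
    refine ⟨max K₀ (r + 1), by omega, ?_⟩
    intro k hk
    have hkK₀ : K₀ ≤ k := le_trans (le_max_left _ _) hk
    have hkr : r + 1 ≤ k := le_trans (le_max_right _ _) hk
    have hk1 : 1 ≤ k := by omega
    have hSLk := hSL k hkr
    rw [Metric.tendsto_atTop] at hSLk
    obtain ⟨M₁, hM₁⟩ := hSLk (ε / 8) (by positivity)
    obtain ⟨N₂, hN₂⟩ := hRG k hk1 (ε / 4) (by positivity)
    obtain ⟨M₂, hM₂⟩ := exists_nat_ge (4 * ((d : ℝ) * ‖μseq k‖) / ε)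
    set M := max (max M₁ (M₂ + 1)) 1 with hM
    refine ⟨max N₂ ((2 * M + 3) * k), fun n hn => ?_⟩
    have hnN₂ : N₂ ≤ n := le_trans (le_max_left _ _) hn
    have hnM : (2 * M + 3) * k ≤ n := le_trans (le_max_right _ _) hn
    have hkpos : 0 < k := hk1
    have hn1 : 1 ≤ n := by
      have : 1 * 1 ≤ (2 * M + 3) * k := Nat.mul_le_mul (by omega) hk1
      omega
    -- extract m
    have hq : n / k * k + n % k = n := by rw [mul_comm]; exact Nat.div_add_mod n k
    have hmod : n % k < k := Nat.mod_lt _ hkpos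
    have hqM : 2 * M + 3 ≤ n / k := (Nat.le_div_iff_mul_le hkpos).mpr hnM
    have hqk : (n / k + 1) * k = n / k * k + k := by ring
    obtain ⟨m, hm1, hmM, hle, hlt⟩ :
        ∃ m, 1 ≤ m ∧ M ≤ m ∧ (2 * m + 1) * k ≤ n ∧ n < (2 * m + 3) * k := by
      rcases Nat.even_or_odd (n / k) with ⟨t, ht⟩ | ⟨t, ht⟩
      · refine ⟨t - 1, by omega, by omega, ?_, ?_⟩
        · have h5 : 2 * (t - 1) + 1 ≤ n / k := by omega
          have := Nat.mul_le_mul_right k h5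
          omega
        · have h5 : n / k + 1 ≤ 2 * (t - 1) + 3 := by omega
          have := Nat.mul_le_mul_right k h5
          omega
      · refine ⟨t, by omega, by omega, ?_, ?_⟩
        · have h5 : 2 * t + 1 ≤ n / k := by omega
          have := Nat.mul_le_mul_right k h5
          omega
        · have h5 : n / k + 1 ≤ 2 * t + 3 := by omega
          have := Nat.mul_le_mul_right k h5
          omega
    have hM₁m : M₁ ≤ m := le_trans (le_trans (le_max_left _ _) (le_max_left _ _)) hmM
    have hM₂m : M₂ + 1 ≤ m := le_trans (le_trans (le_max_right _ _) (le_max_left _ _)) hmM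
    have hmk1 : 1 ≤ (2 * m + 1) * k := by
      have : 1 * 1 ≤ (2 * m + 1) * k := Nat.mul_le_mul (by omega) hk1
      omega
    have hv : 0 < vol d n := vol_pos d hn1
    have hv' : 0 < vol d ((2 * m + 1) * k) := vol_pos d hmk1
    have hvle : vol d ((2 * m + 1) * k) ≤ vol d n := vol_mono d hle
    -- the three estimates
    have hreg_est : ‖S n ω - S ((2 * m + 1) * k) ω‖ ≤ ε / 4 * vol d n :=
      hN₂ n hnN₂ m hle hlt
    have hna_est : ‖S ((2 * m + 1) * k) ω - ∑ z ∈ box d m, T (k - r) z ω‖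
        ≤ ε / 8 * vol d ((2 * m + 1) * k) := hNA' k hkK₀ m hm1
    have hsl_est : ‖(vol d ((2 * m + 1) * k))⁻¹ • ∑ z ∈ box d m, T (k - r) z ω - μseq k‖
        ≤ ε / 8 := by
      have := hM₁ m hM₁m
      rw [dist_eq_norm] at this
      exact this.le
    -- combine
    have step1 : (vol d n)⁻¹ • S n ω - μseq k
        = (vol d n)⁻¹ • (S n ω - S ((2 * m + 1) * k) ω)
          + ((vol d n)⁻¹ • S ((2 * m + 1) * k) ω - μseq k) := by
      rw [smul_sub]; abel
    have term1 : ‖(vol d n)⁻¹ • (S n ω - S ((2 * m + 1) * k) ω)‖ ≤ ε / 4 := by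
      rw [norm_smul, Real.norm_eq_abs, abs_of_pos (inv_pos.mpr hv)]
      calc (vol d n)⁻¹ * ‖S n ω - S ((2 * m + 1) * k) ω‖
          ≤ (vol d n)⁻¹ * (ε / 4 * vol d n) := by
            apply mul_le_mul_of_nonneg_left hreg_est (inv_pos.mpr hv).le
        _ = ε / 4 := by field_simp
    have term2a : ‖(vol d ((2 * m + 1) * k))⁻¹ • S ((2 * m + 1) * k) ω - μseq k‖
        ≤ ε / 8 + ε / 8 := by
      have hdec : (vol d ((2 * m + 1) * k))⁻¹ • S ((2 * m + 1) * k) ω - μseq k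
          = (vol d ((2 * m + 1) * k))⁻¹ • (S ((2 * m + 1) * k) ω - ∑ z ∈ box d m, T (k - r) z ω)
            + ((vol d ((2 * m + 1) * k))⁻¹ • ∑ z ∈ box d m, T (k - r) z ω - μseq k) := by
        rw [smul_sub]; abel
      rw [hdec]
      refine (norm_add_le _ _).trans (add_le_add ?_ hsl_est)
      rw [norm_smul, Real.norm_eq_abs, abs_of_pos (inv_pos.mpr hv')]
      calc (vol d ((2 * m + 1) * k))⁻¹ * ‖S ((2 * m + 1) * k) ω - ∑ z ∈ box d m, T (k - r) z ω‖
          ≤ (vol d ((2 * m + 1) * k))⁻¹ * (ε / 8 * vol d ((2 * m + 1) * k)) := by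
            apply mul_le_mul_of_nonneg_left hna_est (inv_pos.mpr hv').le
        _ = ε / 8 := by field_simp
    have term2b : (1 - vol d ((2 * m + 1) * k) / vol d n) * ‖μseq k‖ ≤ ε / 4 := by
      have hrat := one_sub_div_le_vol_ratio d k m n hd hk1 hm1 hle hlt
      have hmpos : (0:ℝ) < m := by exact_mod_cast hm1
      have hMm : (4 * ((d : ℝ) * ‖μseq k‖) / ε) ≤ m := by
        have : ((M₂ : ℝ)) ≤ m := by exact_mod_cast (by omega : M₂ ≤ m)
        linarith
      have h6 : (d : ℝ) * ‖μseq k‖ ≤ ε / 4 * m := by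
        rw [div_le_iff₀ hε] at hMm
        linarith
      have h7 : 1 - vol d ((2 * m + 1) * k) / vol d n ≤ (d : ℝ) / m := by linarith
      calc (1 - vol d ((2 * m + 1) * k) / vol d n) * ‖μseq k‖
          ≤ (d : ℝ) / m * ‖μseq k‖ := by
            apply mul_le_mul_of_nonneg_right h7 (norm_nonneg _)
        _ ≤ ε / 4 := by
            rw [div_mul_eq_mul_div, div_le_iff₀ hmpos]
            calc (d:ℝ) * ‖μseq k‖ ≤ ε / 4 * m := h6
              _ = ε / 4 * m := rfl
    have term2 : ‖(vol d n)⁻¹ • S ((2 * m + 1) * k) ω - μseq k‖ ≤ ε / 8 + ε / 8 + ε / 4 := by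
      have := smul_est hv hv' hvle (S ((2 * m + 1) * k) ω) (μseq k)
      linarith [term2a, term2b]
    rw [step1]
    refine (norm_add_le _ _).trans ?_
    linarith [term1, term2]
  -- Cauchy property of μseq
  have cauchy : ∀ ε : ℝ, 0 < ε → ∃ K : ℕ, ∀ k k', K ≤ k → K ≤ k' →
      ‖μseq k - μseq k'‖ ≤ 2 * ε := by
    intro ε hε
    obtain ⟨ω, hω⟩ := key.exists
    obtain ⟨K, _, hK⟩ := hω ε hε
    refine ⟨K, fun k k' hk hk' => ?_⟩
    obtain ⟨N, hN⟩ := hK k hk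
    obtain ⟨N', hN'⟩ := hK k' hk'
    set n := max N N'
    have h1 := hN n (le_max_left _ _)
    have h2 := hN' n (le_max_right _ _)
    calc ‖μseq k - μseq k'‖
        ≤ ‖μseq k - (vol d n)⁻¹ • S n ω‖ + ‖(vol d n)⁻¹ • S n ω - μseq k'‖ :=
          norm_sub_le_norm_sub_add_norm_sub _ _ _
      _ ≤ ε + ε := by
          rw [norm_sub_rev]
          exact add_le_add h1 h2
      _ = 2 * ε := by ring
  have hcauchy : CauchySeq μseq := by
    rw [Metric.cauchySeq_iff]
    intro ε hε
    obtain ⟨K, hK⟩ := cauchy (ε / 3) (by positivity)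
    refine ⟨K, fun a ha b hb => ?_⟩
    rw [dist_eq_norm]
    calc ‖μseq a - μseq b‖ ≤ 2 * (ε / 3) := hK a b ha hb
      _ < ε := by linarith
  obtain ⟨Shat, hShat⟩ := cauchySeq_tendsto_of_complete hcauchy
  refine ⟨Shat, ?_, ?_⟩
  · -- mean convergence
    have hc : Tendsto (fun n : ℕ => (1 + (r : ℝ) / n) ^ d) atTop (𝓝 1) := by
      have h0 : Tendsto (fun n : ℕ => (r : ℝ) / n) atTop (𝓝 0) :=
        tendsto_const_div_atTop_nhds_zero_nat (r : ℝ)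
      have h1 : Tendsto (fun n : ℕ => 1 + (r : ℝ) / n) atTop (𝓝 1) := by
        have := h0.const_add (1 : ℝ)
        simpa using this
      have := h1.pow d
      simpa using this
    have hμ : Tendsto (fun n : ℕ => μseq (n + r)) atTop (𝓝 Shat) :=
      hShat.comp (tendsto_add_atTop_nat r)
    have hprod : Tendsto (fun n : ℕ => (1 + (r : ℝ) / n) ^ d • μseq (n + r)) atTop
        (𝓝 Shat) := by
      have := hc.smul hμ
      simpa using this
    refine Tendsto.congr' ?_ hprod
    filter_upwards [eventually_ge_atTop 1] with n hn
    have hnpos : (0:ℝ) < n := by exact_mod_cast hn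
    have hnr1 : 1 ≤ n + r := by omega
    have hveq : (1 + (r : ℝ) / n) ^ d = vol d (n + r) / vol d n := by
      unfold vol
      rw [← div_pow]
      congr 1
      push_cast
      field_simp
    rw [hμseq]
    simp only
    rw [hveq, Nat.add_sub_cancel, smul_smul]
    congr 1
    have hvn : vol d n ≠ 0 := (vol_pos d hn).ne'
    have hvnr : vol d (n + r) ≠ 0 := (vol_pos d hnr1).ne'
    field_simp
  · -- a.s. convergence
    filter_upwards [key] with ω hω
    rw [Metric.tendsto_atTop]
    intro ε hε
    obtain ⟨K, _, hK⟩ := hω (ε / 3) (by positivity)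
    obtain ⟨K₁, hK₁⟩ := (Metric.tendsto_atTop.mp hShat) (ε / 3) (by positivity)
    obtain ⟨N, hN⟩ := hK (max K K₁) (le_max_left _ _)
    refine ⟨N, fun n hn => ?_⟩
    have h1 := hN n hn
    have h2 := hK₁ (max K K₁) (le_max_right _ _)
    rw [dist_eq_norm] at h2 ⊢
    calc ‖(vol d n)⁻¹ • S n ω - Shat‖
        ≤ ‖(vol d n)⁻¹ • S n ω - μseq (max K K₁)‖ + ‖μseq (max K K₁) - Shat‖ :=
          norm_sub_le_norm_sub_add_norm_sub _ _ _
      _ ≤ ε / 3 + ε / 3 := add_le_add h1 h2.le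
      _ < ε := by linarith


end RandomCubical
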